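/- (Limiting default probabilities when d₁ > d₂.) Let A₁ = exp(X) with X ~ N(μ, σ²), σ > 0, let d₁ > d₂ > 0, and set V* := A₁ + d₂. With e := E(A₁) = exp(μ + σ²/2), w := Var(A₁) = exp(2μ + σ²)(exp(σ²) − 1), and the moment-matched parameters μ̃ := ½ ln((e + d₂)⁴/(w + (e + d₂)²)), σ̃ := √(ln(w/(e + d₂)² + 1)), the following hold: (i) P(V* < d₁) = Φ((ln(d₁ − d₂) − μ)/σ) > 0; (ii) μ̃ > μ and σ̃ < σ; (iii) Φ((ln d₁ − μ̃)/σ̃) > Φ((ln(d₁ − d₂) − μ)/σ) if and only if (d₁ − d₂)^σ̃ / d₁^σ < exp(σ̃μ − σμ̃). -/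

import Mathlib

open MeasureTheory ProbabilityTheory

/-- The standard normal distribution function `Φ`. -/
noncomputable def stdNormalCdf (x : ℝ) : ℝ :=
  ((ProbabilityTheory.gaussianReal 0 1) (Set.Iic x)).toReal

lemma stdNormal_Iic_pos (t : ℝ) : 0 < (ProbabilityTheory.gaussianReal 0 1) (Set.Iic t) := by
  by_contra h
  push_neg at h
  have h0 : (ProbabilityTheory.gaussianReal 0 1) (Set.Iic t) = 0 := le_antisymm h zero_le
  have := (ProbabilityTheory.gaussianReal_absolutelyContinuous' 0 one_ne_zero) h0
  simp [Real.volume_Iic] at this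

lemma stdNormalCdf_pos (t : ℝ) : 0 < stdNormalCdf t :=
  ENNReal.toReal_pos (stdNormal_Iic_pos t).ne' (measure_ne_top _ _)

lemma stdNormalCdf_lt_iff (a b : ℝ) : stdNormalCdf a < stdNormalCdf b ↔ a < b := by
  constructor
  · intro h
    by_contra hab
    push_neg at hab
    have : stdNormalCdf b ≤ stdNormalCdf a :=
      ENNReal.toReal_mono (measure_ne_top _ _) (measure_mono (Set.Iic_subset_Iic.2 hab))
    linarith
  · intro hab
    have hsplit : Set.Iic b = Set.Iic a ∪ Set.Ioc a b := (Set.Iic_union_Ioc_eq_Iic hab.le).symm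
    have hdisj : Disjoint (Set.Iic a) (Set.Ioc a b) := by
      apply Set.disjoint_left.2
      rintro x hx ⟨hx1, _⟩
      exact absurd hx (not_le.2 hx1)
    have hpos : 0 < (ProbabilityTheory.gaussianReal 0 1) (Set.Ioc a b) := by
      by_contra h
      push_neg at h
      have h0 : (ProbabilityTheory.gaussianReal 0 1) (Set.Ioc a b) = 0 :=
        le_antisymm h zero_le
      have := (ProbabilityTheory.gaussianReal_absolutelyContinuous' 0 one_ne_zero) h0
      rw [Real.volume_Ioc] at this
      simp only [ENNReal.ofReal_eq_zero, sub_nonpos] at this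
      linarith
    have hmeas : (ProbabilityTheory.gaussianReal 0 1) (Set.Iic b)
        = (ProbabilityTheory.gaussianReal 0 1) (Set.Iic a)
          + (ProbabilityTheory.gaussianReal 0 1) (Set.Ioc a b) := by
      rw [hsplit, measure_union hdisj measurableSet_Ioc]
    unfold stdNormalCdf
    rw [hmeas, ENNReal.toReal_add (measure_ne_top _ _) (measure_ne_top _ _)]
    have := ENNReal.toReal_pos hpos.ne' (measure_ne_top _ _)
    linarith

lemma gaussian_Iio_eq (μ σ : ℝ) (hσ : 0 < σ) (b : ℝ) :
    (ProbabilityTheory.gaussianReal μ ⟨σ ^ 2, sq_nonneg σ⟩) (Set.Iio b)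
      = ENNReal.ofReal (stdNormalCdf ((b - μ) / σ)) := by
  have hmap : (ProbabilityTheory.gaussianReal 0 1).map (fun x => σ * x + μ)
      = ProbabilityTheory.gaussianReal μ ⟨σ ^ 2, sq_nonneg σ⟩ := by
    have h1 : (ProbabilityTheory.gaussianReal 0 1).map (σ * ·)
        = ProbabilityTheory.gaussianReal (σ * 0) (⟨σ ^ 2, sq_nonneg σ⟩ * 1) :=
      ProbabilityTheory.gaussianReal_map_const_mul σ
    have h2 : (ProbabilityTheory.gaussianReal 0 1).map (fun x => σ * x + μ)
        = ((ProbabilityTheory.gaussianReal 0 1).map (σ * ·)).map (· + μ) :=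
      (Measure.map_map (measurable_add_const μ) (measurable_const_mul σ)).symm
    rw [h2, h1, ProbabilityTheory.gaussianReal_map_add_const]
    norm_num
    exact congrArg _ (mul_one _)
  rw [← hmap, Measure.map_apply (by fun_prop) measurableSet_Iio]
  have hpre : (fun x => σ * x + μ) ⁻¹' Set.Iio b = Set.Iio ((b - μ) / σ) := by
    ext x
    simp only [Set.mem_preimage, Set.mem_Iio]
    rw [lt_div_iff₀ hσ]
    constructor <;> intro h <;> nlinarith
  rw [hpre]
  have hIio : (ProbabilityTheory.gaussianReal 0 1) (Set.Iio ((b - μ) / σ))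
      = (ProbabilityTheory.gaussianReal 0 1) (Set.Iic ((b - μ) / σ)) := by
    haveI : NullSingletonClass (ProbabilityTheory.gaussianReal 0 1) :=
      ⟨fun x => (ProbabilityTheory.gaussianReal_absolutelyContinuous 0 one_ne_zero)
        (measure_singleton x)⟩
    exact measure_congr Iio_ae_eq_Iic
  rw [hIio]
  exact (ENNReal.ofReal_toReal (measure_ne_top _ _)).symm

set_option maxHeartbeats 1000000 in
/-- limiting default probabilities when `d₁ > d₂` under cross-ownership of
debt only. With `A₁` lognormal with parameters `(μ, σ²)` and `V* = A₁ + d₂`, and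
moment-matched lognormal parameters `(μ̃, σ̃²)`:
(i) `P(V* < d₁) = Φ((ln(d₁ − d₂) − μ)/σ) > 0`;
(ii) `μ̃ > μ` and `σ̃ < σ`;
(iii) `Φ((ln d₁ − μ̃)/σ̃) > Φ((ln(d₁ − d₂) − μ)/σ)` iff
`(d₁ - d₂)^σ̃ / d₁^σ < exp(σ̃μ − σμ̃)`. -/
theorem limiting_default_probabilities_debt_only_d1_gt_d2
    (μ σ d₁ d₂ e w μt σt : ℝ) (hσ : 0 < σ) (hd₂ : 0 < d₂) (hd : d₂ < d₁)
    (he : e = Real.exp (μ + σ ^ 2 / 2))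
    (hw : w = Real.exp (2 * μ + σ ^ 2) * (Real.exp (σ ^ 2) - 1))
    (hμt : μt = (1 / 2) * Real.log ((e + d₂) ^ 4 / (w + (e + d₂) ^ 2)))
    (hσt : σt = Real.sqrt (Real.log (w / (e + d₂) ^ 2 + 1))) :
    (((ProbabilityTheory.gaussianReal μ ⟨σ ^ 2, sq_nonneg σ⟩).map
        (fun x => Real.exp x + d₂)) (Set.Iio d₁) =
      ENNReal.ofReal (stdNormalCdf ((Real.log (d₁ - d₂) - μ) / σ)) ∧
      0 < stdNormalCdf ((Real.log (d₁ - d₂) - μ) / σ)) ∧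
    (μ < μt ∧ σt < σ) ∧
    (stdNormalCdf ((Real.log (d₁ - d₂) - μ) / σ) <
        stdNormalCdf ((Real.log d₁ - μt) / σt) ↔
      (d₁ - d₂) ^ σt / d₁ ^ σ < Real.exp (σt * μ - σ * μt)) := by
  have hd12 : (0:ℝ) < d₁ - d₂ := by linarith
  have hd1 : (0:ℝ) < d₁ := by linarith
  -- basic quantities
  have he_pos : 0 < e := he ▸ Real.exp_pos _
  set c := e + d₂ with hc_def
  have hc : 0 < c := by positivity
  have hec : e < c := by simp [hc_def]; linarith
  have hE : 1 < Real.exp (σ ^ 2) := by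
    have : (0:ℝ) < σ ^ 2 := by positivity
    simpa using Real.exp_lt_exp.2 this
  have he2 : e ^ 2 = Real.exp (2 * μ + σ ^ 2) := by
    rw [he, sq, ← Real.exp_add]
    congr 1
    ring
  have hw' : w = e ^ 2 * (Real.exp (σ ^ 2) - 1) := by rw [hw, he2]
  have hw_pos : 0 < w := by
    rw [hw']
    nlinarith [pow_pos he_pos 2]
  have hexp2μ : Real.exp (2 * μ) * Real.exp (σ ^ 2) = e ^ 2 := by
    rw [he2, ← Real.exp_add]
  -- part (ii): σt < σ
  have harg_pos : 1 < w / c ^ 2 + 1 := by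
    have : 0 < w / c ^ 2 := by positivity
    linarith
  have hσt_pos : 0 < σt := by
    rw [hσt]
    have : 0 < Real.log (w / c ^ 2 + 1) := Real.log_pos harg_pos
    positivity
  have hσtσ : σt < σ := by
    rw [hσt]
    have harg_lt : w / c ^ 2 + 1 < Real.exp (σ ^ 2) := by
      rw [div_add' _ _ _ (by positivity), div_lt_iff₀ (by positivity)]
      rw [hw']
      nlinarith [mul_pos (show (0:ℝ) < c ^ 2 - e ^ 2 by nlinarith)
        (show (0:ℝ) < Real.exp (σ ^ 2) - 1 by linarith)]
    have hlog : Real.log (w / c ^ 2 + 1) < σ ^ 2 := by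
      calc Real.log (w / c ^ 2 + 1) < Real.log (Real.exp (σ ^ 2)) :=
            Real.log_lt_log (by linarith) harg_lt
        _ = σ ^ 2 := Real.log_exp _
    calc Real.sqrt (Real.log (w / c ^ 2 + 1)) < Real.sqrt (σ ^ 2) :=
          Real.sqrt_lt_sqrt (Real.log_nonneg harg_pos.le) hlog
      _ = σ := Real.sqrt_sq hσ.le
  -- part (ii): μ < μt
  have hμμt : μ < μt := by
    rw [hμt]
    have hden : 0 < w + c ^ 2 := by positivity
    have hfrac : 0 < c ^ 4 / (w + c ^ 2) := by positivity
    have hkey : Real.exp (2 * μ) < c ^ 4 / (w + c ^ 2) := by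
      rw [lt_div_iff₀ hden]
      have h1 : Real.exp (2 * μ) = e ^ 2 / Real.exp (σ ^ 2) := by
        field_simp [← hexp2μ]
        exact hexp2μ
      rw [h1, div_mul_eq_mul_div, div_lt_iff₀ (Real.exp_pos _)]
      rw [hw']
      nlinarith [mul_pos (show (0:ℝ) < c ^ 2 - e ^ 2 by nlinarith)
        (show (0:ℝ) < Real.exp (σ ^ 2) * (c ^ 2 + e ^ 2) - e ^ 2 by nlinarith [pow_pos he_pos 2, pow_pos hc 2])]
    have : 2 * μ < Real.log (c ^ 4 / (w + c ^ 2)) :=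
      (Real.lt_log_iff_exp_lt hfrac).2 hkey
    linarith
  refine ⟨⟨?_, stdNormalCdf_pos _⟩, ⟨hμμt, hσtσ⟩, ?_⟩
  · -- part (i)
    rw [Measure.map_apply (Real.measurable_exp.add_const d₂) measurableSet_Iio]
    have hpre : (fun x => Real.exp x + d₂) ⁻¹' Set.Iio d₁ = Set.Iio (Real.log (d₁ - d₂)) := by
      ext x
      simp only [Set.mem_preimage, Set.mem_Iio]
      constructor
      · intro h
        exact (Real.lt_log_iff_exp_lt hd12).2 (by linarith)
      · intro h
        have := (Real.lt_log_iff_exp_lt hd12).1 h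
        linarith
    rw [hpre, gaussian_Iio_eq μ σ hσ]
  · -- part (iii)
    rw [stdNormalCdf_lt_iff]
    have hlog1 : Real.log ((d₁ - d₂) ^ σt / d₁ ^ σ)
        = σt * Real.log (d₁ - d₂) - σ * Real.log d₁ := by
      rw [Real.log_div (by positivity) (by positivity),
        Real.log_rpow hd12, Real.log_rpow hd1]
    have hpos : 0 < (d₁ - d₂) ^ σt / d₁ ^ σ := by positivity
    rw [div_lt_div_iff₀ hσ hσt_pos, ← Real.log_lt_iff_lt_exp hpos, hlog1]
    constructor <;> intro h <;> nlinarith
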